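/- arXiv:2302.08886 — 2 statements merged into one kernel-verified Lean document; each statement's English description precedes it below -/
import Mathlib

section
/- Let X be a real symmetric n×n matrix with X ⪰ 0 and Tr(X) = 1. Then there exists a vector x ∈ ℝⁿ such that the (1+n)×(1+n) block matrix [[1, xᵀ],[x, X]] is positive semidefinite and eᵀx = 1 if and only if ⟨J,X⟩ ≥ 1. -/
open Matrix

/-- The `(1+n)×(1+n)` block matrix `[[1, xᵀ],[x, X]]`. -/
noncomputable def dblk {n : ℕ} (x : Fin n → ℝ) (X : Matrix (Fin n) (Fin n) ℝ) :
    Matrix (Unit ⊕ Fin n) (Unit ⊕ Fin n) ℝ :=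
  Matrix.fromBlocks 1 (Matrix.of fun _ j => x j) (Matrix.of fun i _ => x i) X

/-- Cauchy–Schwarz for a PSD bilinear form. -/
lemma psd_cauchy_schwarz {n : ℕ} {X : Matrix (Fin n) (Fin n) ℝ} (hX : X.PosSemidef)
    (u v : Fin n → ℝ) :
    (u ⬝ᵥ X *ᵥ v) ^ 2 ≤ (u ⬝ᵥ X *ᵥ u) * (v ⬝ᵥ X *ᵥ v) := by
  have hsym : v ⬝ᵥ X *ᵥ u = u ⬝ᵥ X *ᵥ v := by
    have hT : Xᵀ = X := by rw [← conjTranspose_eq_transpose_of_trivial]; exact hX.1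
    rw [dotProduct_mulVec, dotProduct_comm, ← mulVec_transpose, hT]
  have hq : ∀ t : ℝ, 0 ≤ (v ⬝ᵥ X *ᵥ v) * (t * t) + 2 * (u ⬝ᵥ X *ᵥ v) * t + (u ⬝ᵥ X *ᵥ u) := by
    intro t
    have := hX.dotProduct_mulVec_nonneg (u + t • v)
    simp only [star_trivial, mulVec_add, mulVec_smul, dotProduct_add, add_dotProduct,
      dotProduct_smul, smul_dotProduct, smul_eq_mul] at this
    rw [hsym] at this
    nlinarith
  have hd := discrim_le_zero hq
  unfold discrim at hd
  nlinarith

lemma dblk_iff {n : ℕ} (x : Fin n → ℝ) (X : Matrix (Fin n) (Fin n) ℝ) :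
    (dblk x X).PosSemidef ↔ (X - Matrix.of (fun i j => x i * x j)).PosSemidef := by
  have hB : (Matrix.of fun (_ : Unit) j => x j)ᴴ = Matrix.of fun i (_ : Unit) => x i := by
    ext i j; simp [conjTranspose_apply]
  have h1 : (1 : Matrix Unit Unit ℝ).PosDef := Matrix.PosDef.one
  haveI : Invertible (1 : Matrix Unit Unit ℝ) := invertibleOne
  have := Matrix.PosDef.fromBlocks₁₁ (Matrix.of fun (_ : Unit) j => x j) X h1
  rw [hB] at this
  unfold dblk
  rw [this]
  congr! 1
  ext i j
  simp [Matrix.mul_apply, conjTranspose_apply]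

/-- for a real symmetric `n×n` matrix `X ⪰ 0` with `Tr(X) = 1`, there is a
vector `x` with `[[1,xᵀ],[x,X]] ⪰ 0` and `eᵀx = 1` if and only if `⟨J,X⟩ ≥ 1`. -/
theorem stmt11 {n : ℕ} (X : Matrix (Fin n) (Fin n) ℝ)
    (hX : X.PosSemidef) (htr : X.trace = 1) :
    (∃ x : Fin n → ℝ, (dblk x X).PosSemidef ∧ (∑ i, x i) = 1) ↔
      1 ≤ ∑ i, ∑ j, X i j := by
  set e : Fin n → ℝ := fun _ => 1 with he
  have hsum : ∀ Y : Matrix (Fin n) (Fin n) ℝ, e ⬝ᵥ Y *ᵥ e = ∑ i, ∑ j, Y i j := by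
    intro Y; simp [dotProduct, mulVec, he]
  constructor
  · rintro ⟨x, hpsd, hx1⟩
    have h := (dblk_iff x X).mp hpsd
    have h2 := h.dotProduct_mulVec_nonneg e
    simp only [sub_mulVec, dotProduct_sub, star, RCLike.star_def] at h2
    have hxe : e ⬝ᵥ (Matrix.of fun i j => x i * x j) *ᵥ e = 1 := by
      simp [dotProduct, mulVec, he, ← Finset.sum_mul, ← Finset.mul_sum, hx1]
    have := hsum X
    have h2' : 0 ≤ e ⬝ᵥ X *ᵥ e - e ⬝ᵥ (Matrix.of fun i j => x i * x j) *ᵥ e := by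
      simpa [star] using h2
    rw [hxe, hsum X] at h2'
    linarith
  · intro hs
    set s : ℝ := ∑ i, ∑ j, X i j with hs'
    have hspos : (0:ℝ) < s := lt_of_lt_of_le one_pos hs
    refine ⟨fun i => (∑ j, X i j) / s, ?_, ?_⟩
    · rw [dblk_iff]
      set x : Fin n → ℝ := fun i => (∑ j, X i j) / s with hx
      refine PosSemidef.of_dotProduct_mulVec_nonneg ?_ ?_
      · have hXh := hX.1
        ext i j
        simp only [IsHermitian, conjTranspose_apply, Matrix.sub_apply, Matrix.of_apply, star,
          RCLike.star_def]
        have : X j i = X i j := by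
          conv_lhs => rw [← hXh]
          simp [conjTranspose_apply]
        simp [this, mul_comm]
      · intro z
        have hz : star z = z := by simp [star]
        rw [hz]
        have hzx : z ⬝ᵥ (Matrix.of fun i j => x i * x j) *ᵥ z
            = (z ⬝ᵥ X *ᵥ e) ^ 2 / s ^ 2 := by
          have hxe2 : ∀ i, x i = (X *ᵥ e) i / s := by
            intro i; simp [hx, mulVec, dotProduct, he]
          have : z ⬝ᵥ (Matrix.of fun i j => x i * x j) *ᵥ z = (∑ i, z i * x i) ^ 2 := by
            rw [sq]
            simp only [dotProduct, mulVec, Matrix.of_apply, Finset.mul_sum, Finset.sum_mul]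
            apply Finset.sum_congr rfl; intro i _
            apply Finset.sum_congr rfl; intro j _
            ring
          rw [this]
          have : (∑ i, z i * x i) = (z ⬝ᵥ X *ᵥ e) / s := by
            rw [dotProduct, Finset.sum_div]
            apply Finset.sum_congr rfl; intro i _
            rw [hxe2]; ring
          rw [this, div_pow]
        rw [sub_mulVec, dotProduct_sub, hzx]
        have hcs := psd_cauchy_schwarz hX z e
        have hzz := hX.dotProduct_mulVec_nonneg z
        rw [hz] at hzz
        have hee : e ⬝ᵥ X *ᵥ e = s := hsum X
        rw [hee] at hcs
        have h1 : (z ⬝ᵥ X *ᵥ e) ^ 2 / s ^ 2 ≤ z ⬝ᵥ X *ᵥ z := by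
          rw [div_le_iff₀ (by positivity)]
          calc (z ⬝ᵥ X *ᵥ e) ^ 2 ≤ (z ⬝ᵥ X *ᵥ z) * s := hcs
            _ ≤ (z ⬝ᵥ X *ᵥ z) * s ^ 2 := by
                apply mul_le_mul_of_nonneg_left _ hzz
                nlinarith
        linarith
    · rw [← Finset.sum_div, ← hs']
      exact div_self hspos.ne'
end

section
/- Let Γ be a finite group with n := |Γ|, let k denote the minimum dimension of a non-trivial complex representation of Γ, let A ⊆ Γ be a product-free set, and let λ₂ denote the second largest eigenvalue of the adjacency matrix of the bipartite Cayley graph G_{Γ,A}. Then λ₂ ≤ √(|A|·(n − |A|)/k). -/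
set_option linter.unusedSectionVars false
open Finset Matrix
section Aux
variable {V : Type*} [Fintype V] [DecidableEq V]

noncomputable def eigSp (M : Matrix V V ℝ) (t : ℝ) : Submodule ℝ (V → ℝ) :=
  LinearMap.ker (M.mulVecLin - t • LinearMap.id)

lemma mem_eigSp {M : Matrix V V ℝ} {t : ℝ} {w : V → ℝ} :
    w ∈ eigSp M t ↔ M *ᵥ w = t • w := by
  rw [eigSp, LinearMap.mem_ker, LinearMap.sub_apply, sub_eq_zero]
  simp [Matrix.mulVecLin_apply]

noncomputable def eigBasis {M : Matrix V V ℝ} (hM : M.IsHermitian) : Module.Basis V ℝ (V → ℝ) :=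
  hM.eigenvectorBasis.toBasis.map (WithLp.linearEquiv 2 ℝ _)

lemma eigBasis_apply {M : Matrix V V ℝ} (hM : M.IsHermitian) (i : V) :
    eigBasis hM i = ⇑(hM.eigenvectorBasis i) := by
  simp [eigBasis]

lemma eigBasis_mem {M : Matrix V V ℝ} (hM : M.IsHermitian) (i : V) :
    eigBasis hM i ∈ eigSp M (hM.eigenvalues i) := by
  rw [mem_eigSp, eigBasis_apply]
  exact hM.mulVec_eigenvectorBasis i
variable {V : Type*} [Fintype V] [DecidableEq V]

lemma eigSp_le_span {M : Matrix V V ℝ} (hM : M.IsHermitian) (t : ℝ) :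
    eigSp M t ≤ Submodule.span ℝ (eigBasis hM '' {i | hM.eigenvalues i = t}) := by
  intro w hw
  rw [mem_eigSp] at hw
  rw [Module.Basis.mem_span_image]
  intro i hi
  rw [Finset.mem_coe, Finsupp.mem_support_iff] at hi
  by_contra hne
  set b := eigBasis hM with hb
  set c : V → ℝ := fun j => b.repr w j with hc
  have hw' : ∑ j, (c j * (hM.eigenvalues j - t)) • b j = 0 := by
    have h2 : ∀ j, (c j * (hM.eigenvalues j - t)) • b j
        = c j • (M.mulVecLin (b j)) - t • (c j • b j) := by
      intro j
      have h3 : M.mulVecLin (b j) = hM.eigenvalues j • b j := mem_eigSp.mp (eigBasis_mem hM j)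
      rw [h3, mul_smul, sub_smul, smul_sub, smul_comm (c j) t]
    rw [Finset.sum_congr rfl fun j _ => h2 j, Finset.sum_sub_distrib, ← Finset.smul_sum]
    have h6 : ∑ x, c x • M.mulVecLin (b x) = M.mulVecLin (∑ x, c x • b x) := by
      rw [map_sum]
      exact Finset.sum_congr rfl fun j _ => (M.mulVecLin.map_smul _ _).symm
    rw [h6]
    have h4 : ∑ j, c j • b j = w := b.sum_repr w
    rw [h4]
    show M *ᵥ w - t • w = 0
    rw [hw, sub_self]
  have hli := b.linearIndependent
  rw [Fintype.linearIndependent_iff] at hli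
  have h5 := hli _ hw' i
  rcases mul_eq_zero.mp h5 with h | h
  · exact hi h
  · exact hne (Set.mem_setOf_eq ▸ (by linarith : hM.eigenvalues i = t))

lemma finrank_eigSp_le {M : Matrix V V ℝ} (hM : M.IsHermitian) (t : ℝ) :
    Module.finrank ℝ (eigSp M t) ≤ (univ.filter fun i => hM.eigenvalues i = t).card := by
  have h2 : eigBasis hM '' {i | hM.eigenvalues i = t} =
      ↑((univ.filter fun i => hM.eigenvalues i = t).image (eigBasis hM)) := by
    rw [Finset.coe_image]
    ext i
    simp
  have h1 := eigSp_le_span hM t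
  rw [h2] at h1
  calc Module.finrank ℝ (eigSp M t)
      ≤ Module.finrank ℝ (Submodule.span ℝ
          (((univ.filter fun i => hM.eigenvalues i = t).image (eigBasis hM) : Finset (V → ℝ)) : Set (V → ℝ))) :=
        Submodule.finrank_mono h1
    _ ≤ ((univ.filter fun i => hM.eigenvalues i = t).image (eigBasis hM)).card :=
        finrank_span_finset_le_card _
    _ ≤ (univ.filter fun i => hM.eigenvalues i = t).card := Finset.card_image_le

lemma card_le_finrank_eigSp {M : Matrix V V ℝ} (hM : M.IsHermitian) (t : ℝ) :
    (univ.filter fun i => hM.eigenvalues i = t).card ≤ Module.finrank ℝ (eigSp M t) := by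
  set T := univ.filter fun i => hM.eigenvalues i = t with hT
  have hli : LinearIndependent ℝ (fun i : {x // x ∈ T} => eigBasis hM i) :=
    (eigBasis hM).linearIndependent.comp _ Subtype.val_injective
  have hsp : Submodule.span ℝ (Set.range fun i : {x // x ∈ T} => eigBasis hM i) ≤ eigSp M t := by
    rw [Submodule.span_le]
    rintro _ ⟨i, rfl⟩
    have hit : hM.eigenvalues i = t := (Finset.mem_filter.mp i.2).2
    exact hit ▸ eigBasis_mem hM (i : V)
  have hfr := finrank_span_eq_card hli
  calc T.card = Fintype.card {x // x ∈ T} := (Fintype.card_coe T).symm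
    _ = Module.finrank ℝ (Submodule.span ℝ (Set.range fun i : {x // x ∈ T} => eigBasis hM i)) :=
        hfr.symm
    _ ≤ Module.finrank ℝ (eigSp M t) := Submodule.finrank_mono hsp

lemma sum_sq_eigenvalues {M : Matrix V V ℝ} (hM : M.IsHermitian) :
    ∑ i, hM.eigenvalues i ^ 2 = (M * M).trace := by
  set U : Matrix V V ℝ := (hM.eigenvectorUnitary : Matrix V V ℝ) with hU
  set D : Matrix V V ℝ := Matrix.diagonal (RCLike.ofReal ∘ hM.eigenvalues) with hD
  have h1 : (star U) * U = 1 := Unitary.coe_star_mul_self hM.eigenvectorUnitary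
  have h2 : M * M = U * (D * (D * star U)) := by
    conv_lhs => rw [hM.spectral_theorem, Unitary.conjStarAlgAut_apply]
    simp only [mul_assoc]
    rw [← mul_assoc (star U) U, h1, one_mul]
  rw [h2, Matrix.trace_mul_comm, ← mul_assoc, mul_assoc (D * D) (star U) U, h1, mul_one]
  rw [hD, Matrix.diagonal_mul_diagonal, Matrix.trace_diagonal]
  refine (Finset.sum_congr rfl fun i _ => ?_).symm
  simp [sq]

lemma eig_bound {M : Matrix V V ℝ} (hnn : ∀ x y, 0 ≤ M x y) {r : ℝ}
    (hrow : ∀ x, ∑ y, M x y = r) {t : ℝ} {w : V → ℝ} (hw : M *ᵥ w = t • w) (hw0 : w ≠ 0) :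
    |t| ≤ r := by
  obtain ⟨x0, hx0⟩ := Function.ne_iff.mp hw0
  obtain ⟨x, -, hx⟩ := Finset.exists_max_image univ (fun x => |w x|) ⟨x0, mem_univ x0⟩
  have hpos : 0 < |w x| := lt_of_lt_of_le (abs_pos.mpr hx0) (hx x0 (mem_univ x0))
  have h1 : |t| * |w x| = |(M *ᵥ w) x| := by
    rw [hw]
    rw [Pi.smul_apply, smul_eq_mul, abs_mul]
  have h2 : |(M *ᵥ w) x| ≤ ∑ y, M x y * |w y| := by
    rw [Matrix.mulVec, dotProduct]
    refine (Finset.abs_sum_le_sum_abs _ _).trans ?_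
    refine Finset.sum_le_sum fun y _ => ?_
    rw [abs_mul, abs_of_nonneg (hnn x y)]
  have h3 : ∑ y, M x y * |w y| ≤ ∑ y, M x y * |w x| :=
    Finset.sum_le_sum fun y _ => mul_le_mul_of_nonneg_left (hx y (mem_univ y)) (hnn x y)
  have h4 : ∑ y, M x y * |w x| = r * |w x| := by rw [← Finset.sum_mul, hrow]
  have h5 : |t| * |w x| ≤ r * |w x| := by linarith
  exact le_of_mul_le_mul_right h5 hpos
end Aux

/-- The bipartite Cayley graph `G_{Γ,A}`: two disjoint copies of `Γ`, with `u` in the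
first copy adjacent to `v` in the second copy iff `u·v ∈ A`. -/
def cayleyBip (Γ : Type*) [Group Γ] (A : Finset Γ) : SimpleGraph (Γ ⊕ Γ) where
  Adj x y := (∃ u v, x = Sum.inl u ∧ y = Sum.inr v ∧ u * v ∈ A) ∨
             (∃ u v, x = Sum.inr v ∧ y = Sum.inl u ∧ u * v ∈ A)
  symm := by
    constructor
    rintro x y (⟨u, v, rfl, rfl, huv⟩ | ⟨u, v, rfl, rfl, huv⟩)
    · exact Or.inr ⟨u, v, rfl, rfl, huv⟩
    · exact Or.inl ⟨u, v, rfl, rfl, huv⟩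
  loopless := by
    constructor
    rintro x (⟨u, v, h1, h2, _⟩ | ⟨u, v, h1, h2, _⟩) <;> subst h1 <;> simp_all

instance {Γ : Type*} [Group Γ] [Fintype Γ] [DecidableEq Γ] (A : Finset Γ) :
    DecidableRel (cayleyBip Γ A).Adj := fun x y =>
  inferInstanceAs (Decidable ((∃ u v, x = Sum.inl u ∧ y = Sum.inr v ∧ u * v ∈ A) ∨
    (∃ u v, x = Sum.inr v ∧ y = Sum.inl u ∧ u * v ∈ A)))

/-- The adjacency matrix of a graph is Hermitian (over `ℝ`). -/
lemma adjHerm {W : Type*} [Fintype W] [DecidableEq W] (G : SimpleGraph W)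
    [DecidableRel G.Adj] : (G.adjMatrix ℝ).IsHermitian := by
  rw [Matrix.IsHermitian, Matrix.conjTranspose_eq_transpose_of_trivial]
  exact G.isSymm_adjMatrix

/-- The list of eigenvalues of a Hermitian matrix, with multiplicities,
sorted in nondecreasing order. -/
noncomputable def eigList {W : Type*} [Fintype W] [DecidableEq W] (M : Matrix W W ℝ)
    (hM : M.IsHermitian) : List ℝ :=
  (Finset.univ.val.map hM.eigenvalues).sort (· ≤ ·)

/-- The second largest eigenvalue (with multiplicities) of a Hermitian matrix. -/
noncomputable def secondLargest {W : Type*} [Fintype W] [DecidableEq W] (M : Matrix W W ℝ)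
    (hM : M.IsHermitian) : ℝ :=
  (eigList M hM).getD (Fintype.card W - 2) 0

/-- The minimum dimension of a non-trivial complex representation of `Γ`. -/
noncomputable def minNontrivRepDim (Γ : Type*) [Group Γ] : ℕ :=
  sInf {d : ℕ | ∃ ρ : Γ →* Matrix.GeneralLinearGroup (Fin d) ℂ, ∃ g : Γ, ρ g ≠ 1}


section EigL
variable {V : Type*} [Fintype V] [DecidableEq V] {M : Matrix V V ℝ} (hM : M.IsHermitian)

lemma two_le_count_of_two_getElem {l : List ℝ} {a : ℝ} {i j : ℕ} (hij : i < j)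
    (hj : j < l.length) (h1 : l[i]'(hij.trans hj) = a) (h2 : l[j]'hj = a) :
    2 ≤ l.count a := by
  have hi : i < l.length := hij.trans hj
  have hsplit : l.count a = (l.take (i+1)).count a + (l.drop (i+1)).count a := by
    rw [← List.count_append, List.take_append_drop]
  have hm1 : a ∈ l.take (i+1) := by
    rw [List.mem_iff_getElem]
    refine ⟨i, ?_, ?_⟩
    · rw [List.length_take]; omega
    · rw [List.getElem_take]; exact h1
  have hm2 : a ∈ l.drop (i+1) := by
    rw [List.mem_iff_getElem]
    refine ⟨j - (i+1), ?_, ?_⟩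
    · rw [List.length_drop]; omega
    · rw [List.getElem_drop]
      have : i + 1 + (j - (i+1)) = j := by omega
      simp_rw [this]
      exact h2
  have c1 : 0 < (l.take (i+1)).count a := List.count_pos_iff.mpr hm1
  have c2 : 0 < (l.drop (i+1)).count a := List.count_pos_iff.mpr hm2
  omega

lemma eigList_length : (eigList M hM).length = Fintype.card V := by
  rw [eigList, Multiset.length_sort, Multiset.card_map]
  rfl

lemma eigList_mem {x : ℝ} (hx : x ∈ eigList M hM) : ∃ i, hM.eigenvalues i = x := by
  rw [eigList, Multiset.mem_sort, Multiset.mem_map] at hx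
  obtain ⟨i, -, hi⟩ := hx
  exact ⟨i, hi⟩

lemma eigList_count (b : ℝ) :
    (eigList M hM).count b = (univ.filter fun i => hM.eigenvalues i = b).card := by
  rw [eigList, ← Multiset.coe_count, Multiset.sort_eq, Multiset.count_map]
  rw [Finset.card_filter]
  simp [eq_comm]
  rfl

lemma secondLargest_spec (h2 : 2 ≤ Fintype.card V) :
    ∃ i, hM.eigenvalues i = secondLargest M hM := by
  have hlen : (eigList M hM).length = Fintype.card V := eigList_length hM
  have hlt : Fintype.card V - 2 < (eigList M hM).length := by omega
  rw [secondLargest, List.getD_eq_getElem _ _ (by rw [hlen]; omega)]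
  exact eigList_mem hM (List.getElem_mem _)

lemma secondLargest_count (h2 : 2 ≤ Fintype.card V) {b : ℝ}
    (hb : ∀ i, hM.eigenvalues i ≤ b) (heq : secondLargest M hM = b) :
    2 ≤ (univ.filter fun i => hM.eigenvalues i = b).card := by
  have hlen : (eigList M hM).length = Fintype.card V := eigList_length hM
  set l := eigList M hM with hl
  have hj : Fintype.card V - 1 < l.length := by omega
  have hij : Fintype.card V - 2 < Fintype.card V - 1 := by omega
  have hs : l.Pairwise (· ≤ ·) := Multiset.pairwise_sort _ _
  have h1 : l[Fintype.card V - 2]'(hij.trans hj) = b := by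
    rw [← heq, secondLargest, List.getD_eq_getElem _ _ (by rw [← hl, hlen]; omega)]
  have h2' : l[Fintype.card V - 1]'hj = b := by
    have hle : l[Fintype.card V - 2]'(hij.trans hj) ≤ l[Fintype.card V - 1]'hj := by
      have := hs.rel_get_of_lt (a := ⟨Fintype.card V - 2, hij.trans hj⟩)
        (b := ⟨Fintype.card V - 1, hj⟩) (by simp [Fin.lt_def]; omega)
      simpa using this
    have hub : l[Fintype.card V - 1]'hj ≤ b := by
      obtain ⟨i, hi⟩ := eigList_mem hM (List.getElem_mem hj)
      rw [← hi]; exact hb i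
    rw [h1] at hle
    linarith
  rw [← eigList_count hM b]
  exact two_le_count_of_two_getElem hij hj h1 h2'
end EigL

section Cayley
variable {Γ : Type*} [Group Γ] [Fintype Γ] [DecidableEq Γ] (A : Finset Γ)

lemma cayley_adj_inl_inr (u v : Γ) :
    (cayleyBip Γ A).Adj (Sum.inl u) (Sum.inr v) ↔ u * v ∈ A := by
  constructor
  · rintro (⟨u', v', h1, h2, h3⟩ | ⟨u', v', h1, h2, h3⟩)
    · rw [Sum.inl.injEq] at h1; rw [Sum.inr.injEq] at h2; rwa [h1, h2]
    · exact absurd h1 (by simp)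
  · intro h; exact Or.inl ⟨u, v, rfl, rfl, h⟩

lemma cayley_adj_inl_inl (u w : Γ) : ¬ (cayleyBip Γ A).Adj (Sum.inl u) (Sum.inl w) := by
  rintro (⟨u', v', h1, h2, h3⟩ | ⟨u', v', h1, h2, h3⟩) <;> simp_all

lemma cayley_adj_inr_inr (u w : Γ) : ¬ (cayleyBip Γ A).Adj (Sum.inr u) (Sum.inr w) := by
  rintro (⟨u', v', h1, h2, h3⟩ | ⟨u', v', h1, h2, h3⟩) <;> simp_all

lemma cayley_adj_inr_inl (v u : Γ) :
    (cayleyBip Γ A).Adj (Sum.inr v) (Sum.inl u) ↔ u * v ∈ A := by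
  rw [(cayleyBip Γ A).adj_comm]
  exact cayley_adj_inl_inr A u v

lemma cayley_row_sum (x : Γ ⊕ Γ) :
    ∑ y, (cayleyBip Γ A).adjMatrix ℝ x y = A.card := by
  cases x with
  | inl u =>
    rw [Fintype.sum_sum_type]
    have e1 : ∀ w : Γ, (cayleyBip Γ A).adjMatrix ℝ (Sum.inl u) (Sum.inl w) = 0 := fun w => by
      simp [SimpleGraph.adjMatrix_apply, cayley_adj_inl_inl A u w]
    have e2 : ∀ v : Γ, (cayleyBip Γ A).adjMatrix ℝ (Sum.inl u) (Sum.inr v)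
        = if u * v ∈ A then 1 else 0 := fun v => by
      simp [SimpleGraph.adjMatrix_apply, cayley_adj_inl_inr A u v]
    rw [Finset.sum_congr rfl fun w _ => e1 w, Finset.sum_congr rfl fun v _ => e2 v]
    rw [Finset.sum_const, smul_zero, zero_add]
    rw [Fintype.sum_equiv (Equiv.mulLeft u) _ (fun z => if z ∈ A then (1:ℝ) else 0)
      (fun v => by simp [Equiv.mulLeft])]
    rw [Finset.sum_ite_mem, Finset.univ_inter, Finset.sum_const, nsmul_eq_mul, mul_one]
  | inr v =>
    rw [Fintype.sum_sum_type]
    have e1 : ∀ w : Γ, (cayleyBip Γ A).adjMatrix ℝ (Sum.inr v) (Sum.inr w) = 0 := fun w => by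
      simp [SimpleGraph.adjMatrix_apply, cayley_adj_inr_inr A v w]
    have e2 : ∀ u : Γ, (cayleyBip Γ A).adjMatrix ℝ (Sum.inr v) (Sum.inl u)
        = if u * v ∈ A then 1 else 0 := fun u => by
      simp [SimpleGraph.adjMatrix_apply, cayley_adj_inr_inl A v u]
    rw [Finset.sum_congr rfl fun w _ => e2 w, Finset.sum_congr rfl fun w _ => e1 w]
    rw [Finset.sum_const, smul_zero, add_zero]
    rw [Fintype.sum_equiv (Equiv.mulRight v) _ (fun z => if z ∈ A then (1:ℝ) else 0)
      (fun u => by simp [Equiv.mulRight])]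
    rw [Finset.sum_ite_mem, Finset.univ_inter, Finset.sum_const, nsmul_eq_mul, mul_one]

def sumF (V : Type*) [Fintype V] : (V → ℝ) →ₗ[ℝ] ℝ where
  toFun w := ∑ x, w x
  map_add' := by intros; simp [Finset.sum_add_distrib]
  map_smul' := by intros; simp [Finset.mul_sum]

def tau (g : Γ) : (Γ ⊕ Γ) ≃ (Γ ⊕ Γ) := Equiv.sumCongr (Equiv.mulRight g) (Equiv.mulLeft g⁻¹)

lemma tau_inl (g u : Γ) : tau g (Sum.inl u) = Sum.inl (u * g) := rfl
lemma tau_inr (g v : Γ) : tau g (Sum.inr v) = Sum.inr (g⁻¹ * v) := rfl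

lemma cayley_adj_tau (g : Γ) (x y : Γ ⊕ Γ) :
    (cayleyBip Γ A).adjMatrix ℝ (tau g x) (tau g y) = (cayleyBip Γ A).adjMatrix ℝ x y := by
  cases x with
  | inl u => cases y with
    | inl w => simp [tau_inl, SimpleGraph.adjMatrix_apply, cayley_adj_inl_inl]
    | inr v =>
      rw [tau_inl, tau_inr]
      simp only [SimpleGraph.adjMatrix_apply, cayley_adj_inl_inr]
      have : u * g * (g⁻¹ * v) = u * v := by group
      rw [this]
  | inr v => cases y with
    | inl u =>
      rw [tau_inr, tau_inl]
      simp only [SimpleGraph.adjMatrix_apply, cayley_adj_inr_inl]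
      have : u * g * (g⁻¹ * v) = u * v := by group
      rw [this]
    | inr w => simp [tau_inr, SimpleGraph.adjMatrix_apply, cayley_adj_inr_inr]

lemma eigSp_tau {t : ℝ} {w : (Γ ⊕ Γ) → ℝ}
    (hw : w ∈ eigSp ((cayleyBip Γ A).adjMatrix ℝ) t) (g : Γ) :
    (w ∘ tau g) ∈ eigSp ((cayleyBip Γ A).adjMatrix ℝ) t := by
  set B := (cayleyBip Γ A).adjMatrix ℝ with hB
  rw [mem_eigSp] at hw ⊢
  funext x
  show ∑ y, B x y * (w ∘ tau g) y = (t • (w ∘ tau g)) x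
  calc ∑ y, B x y * w (tau g y)
      = ∑ y, B (tau g x) (tau g y) * w (tau g y) := by
        refine Finset.sum_congr rfl fun y _ => ?_
        rw [hB, cayley_adj_tau]
    _ = ∑ z, B (tau g x) z * w z := Fintype.sum_equiv (tau g) _ _ (fun y => rfl)
    _ = (B *ᵥ w) (tau g x) := rfl
    _ = (t • (w ∘ tau g)) x := by rw [hw]; rfl

lemma sumF_tau (w : (Γ ⊕ Γ) → ℝ) (g : Γ) : sumF _ (w ∘ tau g) = sumF _ w :=
  Equiv.sum_comp (tau g) w

def flipL (Γ : Type*) : ((Γ ⊕ Γ) → ℝ) →ₗ[ℝ] ((Γ ⊕ Γ) → ℝ) where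
  toFun w := Sum.elim (fun u => w (Sum.inl u)) (fun v => - w (Sum.inr v))
  map_add' := by intros w₁ w₂; funext x; cases x <;> simp <;> ring
  map_smul' := by intros c w; funext x; cases x <;> simp <;> ring

lemma flipL_involutive (Γ : Type*) : Function.Involutive (flipL Γ) := by
  intro w; funext x; cases x <;> simp [flipL]

lemma cayley_mulVec_inl (w : (Γ ⊕ Γ) → ℝ) (u : Γ) :
    ((cayleyBip Γ A).adjMatrix ℝ *ᵥ w) (Sum.inl u)
      = ∑ v, (cayleyBip Γ A).adjMatrix ℝ (Sum.inl u) (Sum.inr v) * w (Sum.inr v) := by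
  show ∑ y, (cayleyBip Γ A).adjMatrix ℝ (Sum.inl u) y * w y = _
  rw [Fintype.sum_sum_type]
  have hz : ∑ w' : Γ, (cayleyBip Γ A).adjMatrix ℝ (Sum.inl u) (Sum.inl w') * w (Sum.inl w') = 0 :=
    Finset.sum_eq_zero fun w' _ => by
      simp [SimpleGraph.adjMatrix_apply, cayley_adj_inl_inl]
  rw [hz, zero_add]

lemma cayley_mulVec_inr (w : (Γ ⊕ Γ) → ℝ) (v : Γ) :
    ((cayleyBip Γ A).adjMatrix ℝ *ᵥ w) (Sum.inr v)
      = ∑ u, (cayleyBip Γ A).adjMatrix ℝ (Sum.inr v) (Sum.inl u) * w (Sum.inl u) := by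
  show ∑ y, (cayleyBip Γ A).adjMatrix ℝ (Sum.inr v) y * w y = _
  rw [Fintype.sum_sum_type]
  have hz : ∑ w' : Γ, (cayleyBip Γ A).adjMatrix ℝ (Sum.inr v) (Sum.inr w') * w (Sum.inr w') = 0 :=
    Finset.sum_eq_zero fun w' _ => by
      simp [SimpleGraph.adjMatrix_apply, cayley_adj_inr_inr]
  rw [hz, add_zero]

lemma flipL_eigSp {t : ℝ} {w : (Γ ⊕ Γ) → ℝ}
    (hw : w ∈ eigSp ((cayleyBip Γ A).adjMatrix ℝ) t) :
    flipL Γ w ∈ eigSp ((cayleyBip Γ A).adjMatrix ℝ) (-t) := by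
  rw [mem_eigSp] at hw ⊢
  have mv : ∀ x, ((cayleyBip Γ A).adjMatrix ℝ *ᵥ w) x = t * w x := fun x => by rw [hw]; rfl
  funext x
  cases x with
  | inl u =>
    show ((cayleyBip Γ A).adjMatrix ℝ *ᵥ flipL Γ w) (Sum.inl u) = (-t) * (flipL Γ w) (Sum.inl u)
    rw [cayley_mulVec_inl]
    have : ∀ v : Γ, (cayleyBip Γ A).adjMatrix ℝ (Sum.inl u) (Sum.inr v) * (flipL Γ w) (Sum.inr v)
        = - ((cayleyBip Γ A).adjMatrix ℝ (Sum.inl u) (Sum.inr v) * w (Sum.inr v)) := fun v => by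
      show _ * (- w (Sum.inr v)) = _
      ring
    rw [Finset.sum_congr rfl fun v _ => this v, Finset.sum_neg_distrib, ← cayley_mulVec_inl, mv]
    show -(t * w (Sum.inl u)) = (-t) * w (Sum.inl u)
    ring
  | inr v =>
    show ((cayleyBip Γ A).adjMatrix ℝ *ᵥ flipL Γ w) (Sum.inr v) = (-t) * (flipL Γ w) (Sum.inr v)
    rw [cayley_mulVec_inr]
    have : ∀ u : Γ, (flipL Γ w) (Sum.inl u) = w (Sum.inl u) := fun u => rfl
    rw [Finset.sum_congr rfl fun u _ => by rw [this u], ← cayley_mulVec_inr, mv]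
    show t * w (Sum.inr v) = (-t) * (- w (Sum.inr v))
    ring


lemma tau_mul (g h : Γ) (x : Γ ⊕ Γ) : tau (g * h) x = tau h (tau g x) := by
  cases x with
  | inl u => rw [tau_inl, tau_inl, tau_inl, mul_assoc]
  | inr v => rw [tau_inr, tau_inr, tau_inr, _root_.mul_inv_rev, mul_assoc]

lemma tau_one (x : Γ ⊕ Γ) : tau (1 : Γ) x = x := by
  cases x with
  | inl u => rw [tau_inl, mul_one]
  | inr v => rw [tau_inr, inv_one, one_mul]

noncomputable def W0 (t : ℝ) : Submodule ℝ ((Γ ⊕ Γ) → ℝ) :=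
  eigSp ((cayleyBip Γ A).adjMatrix ℝ) t ⊓ LinearMap.ker (sumF (Γ ⊕ Γ))

lemma key_rep {t : ℝ} (ht : 0 < t) (hW : W0 A t ≠ ⊥) :
    minNontrivRepDim Γ ≤ Module.finrank ℝ (W0 A t) ∧ 1 ≤ minNontrivRepDim Γ := by
  classical
  set B := (cayleyBip Γ A).adjMatrix ℝ with hB
  set W := W0 A t with hWdef
  -- invariance of W under the translation action
  have hinv : ∀ g : Γ, ∀ w ∈ W, (LinearMap.funLeft ℝ ℝ (tau g)) w ∈ W := by
    intro g w hw
    rw [hWdef, W0, Submodule.mem_inf] at hw ⊢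
    refine ⟨eigSp_tau A hw.1 g, ?_⟩
    rw [LinearMap.mem_ker]
    have : (LinearMap.funLeft ℝ ℝ (tau g)) w = w ∘ tau g := rfl
    rw [this, sumF_tau]
    exact LinearMap.mem_ker.mp hw.2
  let T : Γ → (W →ₗ[ℝ] W) := fun g => (LinearMap.funLeft ℝ ℝ (tau g)).restrict (hinv g)
  have Tapp : ∀ (g : Γ) (w : W), ((T g w : (Γ ⊕ Γ) → ℝ)) = (w : (Γ ⊕ Γ) → ℝ) ∘ tau g :=
    fun g w => rfl
  have Tcomp : ∀ g h : Γ, T (g * h) = (T g).comp (T h) := by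
    intro g h
    refine LinearMap.ext fun w => Subtype.ext ?_
    rw [LinearMap.comp_apply, Tapp, Tapp, Tapp]
    funext x
    show (w : (Γ ⊕ Γ) → ℝ) (tau (g * h) x) = (w : (Γ ⊕ Γ) → ℝ) (tau h (tau g x))
    rw [tau_mul]
  have Tone : T 1 = LinearMap.id := by
    refine LinearMap.ext fun w => Subtype.ext ?_
    rw [Tapp]
    funext x
    show (w : (Γ ⊕ Γ) → ℝ) (tau (1 : Γ) x) = (w : (Γ ⊕ Γ) → ℝ) x
    rw [tau_one]
  set d := Module.finrank ℝ W with hd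
  let bW : Module.Basis (Fin d) ℝ W := Module.finBasis ℝ W
  let φ : Γ → Matrix (Fin d) (Fin d) ℝ := fun g => LinearMap.toMatrix bW bW (T g)
  have φmul : ∀ g h : Γ, φ (g * h) = φ g * φ h := by
    intro g h
    show LinearMap.toMatrix bW bW (T (g * h)) = _
    rw [Tcomp, LinearMap.toMatrix_comp bW bW bW]
  have φone : φ 1 = 1 := by
    show LinearMap.toMatrix bW bW (T 1) = 1
    rw [Tone, LinearMap.toMatrix_id]
  let c : Matrix (Fin d) (Fin d) ℝ →+* Matrix (Fin d) (Fin d) ℂ := (algebraMap ℝ ℂ).mapMatrix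
  let ρ : Γ →* Matrix.GeneralLinearGroup (Fin d) ℂ :=
  { toFun := fun g => ⟨c (φ g), c (φ g⁻¹),
      by rw [← _root_.map_mul, ← φmul, mul_inv_cancel, φone, _root_.map_one],
      by rw [← _root_.map_mul, ← φmul, inv_mul_cancel, φone, _root_.map_one]⟩
    map_one' := by
      refine Units.ext ?_
      show c (φ 1) = 1
      rw [φone, _root_.map_one]
    map_mul' := by
      intro g h
      refine Units.ext ?_
      show c (φ (g * h)) = c (φ g) * c (φ h)
      rw [φmul, _root_.map_mul] }
  -- nontriviality
  have hnt : ∃ g : Γ, ρ g ≠ 1 := by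
    by_contra hcon
    push_neg at hcon
    have hTid : ∀ g : Γ, T g = LinearMap.id := by
      intro g
      have h1 : c (φ g) = 1 := congrArg Units.val (hcon g)
      have h2 : φ g = 1 := by
        have : c (φ g) = c 1 := by rw [h1, _root_.map_one]
        exact Matrix.map_injective (algebraMap ℝ ℂ).injective (by exact this)
      refine (LinearMap.toMatrix bW bW).injective ?_
      show φ g = (LinearMap.toMatrix bW bW) LinearMap.id
      rw [h2, LinearMap.toMatrix_id]
    apply hW
    rw [Submodule.eq_bot_iff]
    intro w hw
    have hwinv : ∀ g : Γ, (w ∘ tau g) = w := by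
      intro g
      have := congrArg Subtype.val (LinearMap.congr_fun (hTid g) ⟨w, hw⟩)
      exact this
    set a := w (Sum.inl 1) with ha
    set b := w (Sum.inr 1) with hbb
    have hca : ∀ u : Γ, w (Sum.inl u) = a := by
      intro u
      have := congrFun (hwinv u) (Sum.inl 1)
      simp only [Function.comp_apply, tau_inl, one_mul] at this
      rw [ha]
      exact this
    have hcb : ∀ v : Γ, w (Sum.inr v) = b := by
      intro v
      have := congrFun (hwinv v⁻¹) (Sum.inr 1)
      simp only [Function.comp_apply, tau_inr, inv_inv, mul_one] at this
      rw [hbb]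
      exact this
    have hsum : (Fintype.card Γ : ℝ) * a + (Fintype.card Γ : ℝ) * b = 0 := by
      have h0 : sumF (Γ ⊕ Γ) w = 0 := LinearMap.mem_ker.mp hw.2
      have : sumF (Γ ⊕ Γ) w = ∑ x : Γ ⊕ Γ, w x := rfl
      rw [this, Fintype.sum_sum_type] at h0
      rw [Finset.sum_congr rfl fun u _ => hca u, Finset.sum_congr rfl fun v _ => hcb v] at h0
      simpa [Finset.sum_const, nsmul_eq_mul, Finset.card_univ] using h0
    have heig : t * a = (A.card : ℝ) * b := by
      have h1 : (B *ᵥ w) (Sum.inl 1) = t * a := by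
        have := mem_eigSp.mp hw.1
        rw [this]
        show t * w (Sum.inl 1) = t * a
        rw [← ha]
      have h2 : (B *ᵥ w) (Sum.inl 1) = (A.card : ℝ) * b := by
        rw [cayley_mulVec_inl]
        rw [Finset.sum_congr rfl fun v _ => by rw [hcb v]]
        rw [← Finset.sum_mul]
        have hrow : ∑ v : Γ, B (Sum.inl 1) (Sum.inr v) = (A.card : ℝ) := by
          have h3 := cayley_row_sum A (Sum.inl 1)
          rw [Fintype.sum_sum_type] at h3
          have hz : ∑ w' : Γ, (cayleyBip Γ A).adjMatrix ℝ (Sum.inl 1) (Sum.inl w') = 0 :=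
            Finset.sum_eq_zero fun w' _ => by
              simp [SimpleGraph.adjMatrix_apply, cayley_adj_inl_inl]
          rw [hz, zero_add] at h3
          exact h3
        rw [hrow]
      rw [← h1, h2]
    have hn : (0:ℝ) < (Fintype.card Γ : ℝ) := by
      exact_mod_cast Fintype.card_pos
    have hb' : b = -a := by
      have := hsum
      field_simp at this
      nlinarith [this]
    have ha0 : a = 0 := by
      rw [hb'] at heig
      have hA0 : (0:ℝ) ≤ (A.card : ℝ) := Nat.cast_nonneg _
      nlinarith [heig]
    have hb0 : b = 0 := by rw [hb', ha0, neg_zero]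
    funext x
    cases x with
    | inl u => rw [hca u, ha0]; rfl
    | inr v => rw [hcb v, hb0]; rfl
  -- conclude
  obtain ⟨g, hg⟩ := hnt
  have hdS : d ∈ {d : ℕ | ∃ ρ' : Γ →* Matrix.GeneralLinearGroup (Fin d) ℂ, ∃ g : Γ, ρ' g ≠ 1} :=
    ⟨ρ, g, hg⟩
  constructor
  · exact Nat.sInf_le hdS
  · have hkS := Nat.sInf_mem (⟨d, hdS⟩ :
      Set.Nonempty {d : ℕ | ∃ ρ' : Γ →* Matrix.GeneralLinearGroup (Fin d) ℂ, ∃ g : Γ, ρ' g ≠ 1})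
    rw [minNontrivRepDim]
    rcases Nat.eq_zero_or_pos (sInf {d : ℕ |
        ∃ ρ' : Γ →* Matrix.GeneralLinearGroup (Fin d) ℂ, ∃ g : Γ, ρ' g ≠ 1}) with h0 | h1
    · exfalso
      rw [h0] at hkS
      obtain ⟨ρ₀, g₀, hg₀⟩ := hkS
      exact hg₀ (Units.ext (Subsingleton.elim _ _))
    · exact h1
end Cayley

set_option maxHeartbeats 1000000 in
/-- if `A ⊆ Γ` is product-free, then the second largest adjacency
eigenvalue `λ₂` of the bipartite Cayley graph `G_{Γ,A}` satisfies
`λ₂ ≤ √(|A|·(n − |A|)/k)`, where `n = |Γ|` and `k` is the minimum dimension of a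
non-trivial complex representation of `Γ`. -/
theorem stmt18 (Γ : Type*) [Group Γ] [Fintype Γ] [DecidableEq Γ] (A : Finset Γ)
    (hpf : ∀ a ∈ A, ∀ b ∈ A, a * b ∉ A) :
    secondLargest ((cayleyBip Γ A).adjMatrix ℝ) (adjHerm (cayleyBip Γ A)) ≤
      Real.sqrt ((A.card : ℝ) * ((Fintype.card Γ : ℝ) - A.card) / (minNontrivRepDim Γ)) := by
  classical
  set B := (cayleyBip Γ A).adjMatrix ℝ with hB
  set hM := adjHerm (cayleyBip Γ A) with hMdef
  set μ := secondLargest B hM with hmu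
  set n : ℝ := (Fintype.card Γ : ℝ) with hn
  set r : ℝ := (A.card : ℝ) with hr
  rcases le_or_gt μ 0 with hneg | hpos
  · exact hneg.trans (Real.sqrt_nonneg _)
  have hr0 : (0:ℝ) ≤ r := Nat.cast_nonneg _
  have hcardV : Fintype.card (Γ ⊕ Γ) = 2 * Fintype.card Γ := by
    rw [Fintype.card_sum]; ring
  have hn1 : 1 ≤ Fintype.card Γ := Fintype.card_pos
  have h2V : 2 ≤ Fintype.card (Γ ⊕ Γ) := by omega
  -- the all-ones vector
  have hone_mem : (fun _ => (1:ℝ)) ∈ eigSp B r := by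
    rw [mem_eigSp]
    funext x
    show ∑ y, B x y * 1 = r * 1
    simp only [mul_one]
    exact cayley_row_sum A x
  have hone_ne : (fun _ => (1:ℝ)) ≠ (0 : (Γ ⊕ Γ) → ℝ) := by
    intro h
    have := congrFun h (Sum.inl 1)
    norm_num at this
  -- eigenvalue bound
  have hnn : ∀ x y, 0 ≤ B x y := by
    intro x y
    rw [hB, SimpleGraph.adjMatrix_apply]
    split_ifs <;> norm_num
  have hbound : ∀ i, hM.eigenvalues i ≤ r := by
    intro i
    have hv := hM.mulVec_eigenvectorBasis i
    have hvne : (⇑(hM.eigenvectorBasis i) : (Γ ⊕ Γ) → ℝ) ≠ 0 := by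
      intro h
      exact hM.eigenvectorBasis.orthonormal.ne_zero i (by ext x; exact congrFun h x)
    have := eig_bound hnn (cayley_row_sum A) hv hvne
    exact (abs_le.mp this).2
  have hμeig : ∃ i, hM.eigenvalues i = μ := secondLargest_spec hM h2V
  have hμler : μ ≤ r := by
    obtain ⟨i, hi⟩ := hμeig
    rw [← hi]; exact hbound i
  have hrpos : (0:ℝ) < r := lt_of_lt_of_le hpos hμler
  -- symmetry of B
  have hsymm : ∀ x y, B x y = B y x := by
    intro x y
    rw [hB, SimpleGraph.adjMatrix_apply, SimpleGraph.adjMatrix_apply]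
    exact if_congr ((cayleyBip Γ A).adj_comm x y) rfl rfl
  -- trace identity
  have htr : ∑ i, hM.eigenvalues i ^ 2 = 2 * (Fintype.card Γ : ℝ) * r := by
    rw [sum_sq_eigenvalues hM]
    have hdiag : ∀ x, (B * B) x x = ∑ y, B x y := by
      intro x
      rw [Matrix.mul_apply]
      refine Finset.sum_congr rfl fun y _ => ?_
      rw [← hsymm x y]
      rw [hB, SimpleGraph.adjMatrix_apply]
      split_ifs <;> norm_num
    have htrace : (B * B).trace = ∑ x, (B * B) x x := rfl
    have hconst : ∀ x : Γ ⊕ Γ, (B * B) x x = r := by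
      intro x
      rw [hdiag x]
      exact cayley_row_sum A x
    rw [htrace, Finset.sum_congr rfl fun x _ => hconst x, Finset.sum_const, Finset.card_univ,
      hcardV, nsmul_eq_mul]
    push_cast
    ring
  -- kernel of sum functional
  have hsumone : sumF (Γ ⊕ Γ) (fun _ => (1:ℝ)) = 2 * (Fintype.card Γ : ℝ) := by
    show ∑ _x : Γ ⊕ Γ, (1:ℝ) = _
    rw [Finset.sum_const, Finset.card_univ, hcardV, nsmul_eq_mul]
    push_cast
    ring
  have hker : ∀ {t : ℝ}, t ≠ r → eigSp B t ≤ LinearMap.ker (sumF (Γ ⊕ Γ)) := by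
    intro t hts w hw
    rw [mem_eigSp] at hw
    rw [LinearMap.mem_ker]
    have h1 : ∑ x, (B *ᵥ w) x = r * ∑ y, w y := by
      calc ∑ x, (B *ᵥ w) x = ∑ x, ∑ y, B x y * w y := rfl
        _ = ∑ y, ∑ x, B x y * w y := Finset.sum_comm
        _ = ∑ y, (∑ x, B x y) * w y := by
            exact Finset.sum_congr rfl fun y _ => (Finset.sum_mul _ _ _).symm
        _ = ∑ y, r * w y := by
            refine Finset.sum_congr rfl fun y _ => ?_
            have : ∑ x, B x y = r := by
              rw [Finset.sum_congr rfl fun x _ => hsymm x y]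
              exact cayley_row_sum A y
            rw [this]
        _ = r * ∑ y, w y := by rw [Finset.mul_sum]
    have h2 : ∑ x, (B *ᵥ w) x = t * ∑ x, w x := by
      rw [hw]
      show ∑ x, t * w x = _
      rw [Finset.mul_sum]
    have h3 : (t - r) * ∑ x, w x = 0 := by
      rw [sub_mul]
      rw [← h1, ← h2, sub_self]
    have h4 : ∑ x, w x = 0 := by
      rcases mul_eq_zero.mp h3 with h | h
      · exact absurd (by linarith [sub_eq_zero.mp h] : t = r) hts
      · exact h
    exact h4
  -- flip inequality for finranks
  have hflip : ∀ t : ℝ, Module.finrank ℝ (eigSp B t) ≤ Module.finrank ℝ (eigSp B (-t)) := by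
    intro t
    set F : ((Γ ⊕ Γ) → ℝ) ≃ₗ[ℝ] ((Γ ⊕ Γ) → ℝ) :=
      LinearEquiv.ofInvolutive (flipL Γ) (flipL_involutive Γ) with hF
    have hmap : (eigSp B t).map (F : ((Γ ⊕ Γ) → ℝ) →ₗ[ℝ] ((Γ ⊕ Γ) → ℝ)) ≤ eigSp B (-t) := by
      rintro _ ⟨w, hw, rfl⟩
      exact flipL_eigSp A hw
    calc Module.finrank ℝ (eigSp B t)
        = Module.finrank ℝ ((eigSp B t).map
            (F : ((Γ ⊕ Γ) → ℝ) →ₗ[ℝ] ((Γ ⊕ Γ) → ℝ))) := (LinearEquiv.finrank_map_eq F _).symm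
      _ ≤ Module.finrank ℝ (eigSp B (-t)) := Submodule.finrank_mono hmap
  -- counts
  set cnt : ℝ → ℕ := fun t => ((univ : Finset (Γ ⊕ Γ)).filter fun i => hM.eigenvalues i = t).card
    with hcnt
  have hcnt_ge : ∀ t : ℝ, Module.finrank ℝ (eigSp B t) ≤ cnt t := fun t => finrank_eigSp_le hM t
  have hcnt_le : ∀ t : ℝ, cnt t ≤ Module.finrank ℝ (eigSp B t) := fun t => card_le_finrank_eigSp hM t
  have hcnt_r : 1 ≤ cnt r := by
    refine le_trans ?_ (hcnt_ge r)
    rw [Nat.succ_le_iff]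
    rw [Module.finrank_pos_iff_exists_ne_zero]
    exact ⟨⟨_, hone_mem⟩, fun h => hone_ne (congrArg Subtype.val h)⟩
  have hcnt_negr : 1 ≤ cnt (-r) := by
    refine le_trans ?_ (hcnt_ge (-r))
    rw [Nat.succ_le_iff, Module.finrank_pos_iff_exists_ne_zero]
    refine ⟨⟨flipL Γ (fun _ => (1:ℝ)), flipL_eigSp A hone_mem⟩, fun h => ?_⟩
    have h2 := congrFun (congrArg Subtype.val h) (Sum.inl 1)
    exact one_ne_zero (h2 : (1:ℝ) = 0)
  -- sum over a filtered set
  have hsum_filter : ∀ t : ℝ,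
      ∑ i ∈ ((univ : Finset (Γ ⊕ Γ)).filter fun i => hM.eigenvalues i = t),
        hM.eigenvalues i ^ 2 = (cnt t : ℝ) * t ^ 2 := by
    intro t
    rw [Finset.sum_congr rfl fun i hi => by rw [(Finset.mem_filter.mp hi).2]]
    rw [Finset.sum_const, nsmul_eq_mul]
  have hdisj : ∀ t s : ℝ, t ≠ s →
      Disjoint ((univ : Finset (Γ ⊕ Γ)).filter fun i => hM.eigenvalues i = t)
        ((univ : Finset (Γ ⊕ Γ)).filter fun i => hM.eigenvalues i = s) := by
    intro t s hts
    rw [Finset.disjoint_left]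
    intro i hi1 hi2
    exact hts ((Finset.mem_filter.mp hi1).2.symm.trans (Finset.mem_filter.mp hi2).2)
  -- set k
  set k := minNontrivRepDim Γ with hk
  -- final inequality, by cases
  have hfinal : μ ^ 2 * (k : ℝ) ≤ r * (n - r) ∧ 1 ≤ k := by
    rcases eq_or_lt_of_le hμler with hcase | hcase
    · -- μ = r
      have hcnt2 : 2 ≤ cnt r := secondLargest_count hM h2V hbound (hmu.symm.trans hcase)
      -- decompose the eigenspace
      have hsup : Submodule.span ℝ {(fun _ => (1:ℝ) : (Γ ⊕ Γ) → ℝ)} ⊔ W0 A r = eigSp B r := by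
        apply le_antisymm
        · refine sup_le ?_ inf_le_left
          rw [Submodule.span_le, Set.singleton_subset_iff]
          exact hone_mem
        · intro w hw
          set c : ℝ := sumF (Γ ⊕ Γ) w / (2 * (Fintype.card Γ : ℝ)) with hc
          have hw2 : w = c • (fun _ => (1:ℝ)) + (w - c • (fun _ => (1:ℝ))) := by ring_nf
          rw [Submodule.mem_sup]
          refine ⟨c • (fun _ => (1:ℝ)), Submodule.smul_mem _ c (Submodule.mem_span_singleton_self _),
            w - c • (fun _ => (1:ℝ)), ?_, by rw [← hw2]⟩
          rw [W0, Submodule.mem_inf]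
          constructor
          · exact Submodule.sub_mem _ hw (Submodule.smul_mem _ c hone_mem)
          · rw [LinearMap.mem_ker, map_sub, _root_.map_smul, hsumone]
            rw [hc, smul_eq_mul]
            have h2n : (2 * (Fintype.card Γ : ℝ)) ≠ 0 := by positivity
            rw [div_mul_cancel₀ _ h2n, sub_self]
      have hinf : Submodule.span ℝ {(fun _ => (1:ℝ) : (Γ ⊕ Γ) → ℝ)} ⊓ W0 A r = ⊥ := by
        rw [Submodule.eq_bot_iff]
        intro w hw
        obtain ⟨hw1, hw2⟩ := Submodule.mem_inf.mp hw
        obtain ⟨c, rfl⟩ := Submodule.mem_span_singleton.mp hw1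
        have h0 : sumF (Γ ⊕ Γ) (c • (fun _ => (1:ℝ))) = 0 :=
          LinearMap.mem_ker.mp (Submodule.mem_inf.mp hw2).2
        rw [_root_.map_smul, hsumone, smul_eq_mul] at h0
        have hc0 : c = 0 := by
          have h2n : (0:ℝ) < 2 * (Fintype.card Γ : ℝ) := by positivity
          rcases mul_eq_zero.mp h0 with h | h
          · exact h
          · linarith
        rw [hc0, zero_smul]
      have hrank : Module.finrank ℝ (eigSp B r) = 1 + Module.finrank ℝ (W0 A r) := by
        have := Submodule.finrank_sup_add_finrank_inf_eq
          (Submodule.span ℝ {(fun _ => (1:ℝ) : (Γ ⊕ Γ) → ℝ)}) (W0 A r)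
        rw [hsup, hinf, finrank_bot, add_zero, finrank_span_singleton hone_ne] at this
        exact this
      have hW0rank : 1 ≤ Module.finrank ℝ (W0 A r) := by
        have h1 := hcnt_le r
        omega
      have hW0ne : W0 A r ≠ ⊥ := by
        intro h
        rw [h, finrank_bot] at hW0rank
        omega
      obtain ⟨hk1, hk2⟩ := key_rep A (hcase ▸ hpos) hW0ne
      have hcntr' : k + 1 ≤ cnt r := by
        have := hcnt_ge r
        omega
      have hcntnegr' : k + 1 ≤ cnt (-r) := by
        have h1 := hflip r
        have h2 := hcnt_ge (-r)
        omega
      -- trace bound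
      have hineq : 2 * ((k : ℝ) + 1) * r ^ 2 ≤ 2 * (Fintype.card Γ : ℝ) * r := by
        rw [← htr]
        have hsub : (((univ : Finset (Γ ⊕ Γ)).filter fun i => hM.eigenvalues i = r) ∪
            ((univ : Finset (Γ ⊕ Γ)).filter fun i => hM.eigenvalues i = -r)) ⊆ univ :=
          Finset.subset_univ _
        have hd := hdisj r (-r) (by linarith)
        have hge : ∑ i ∈ (((univ : Finset (Γ ⊕ Γ)).filter fun i => hM.eigenvalues i = r) ∪
              ((univ : Finset (Γ ⊕ Γ)).filter fun i => hM.eigenvalues i = -r)),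
            hM.eigenvalues i ^ 2 ≤ ∑ i, hM.eigenvalues i ^ 2 :=
          Finset.sum_le_sum_of_subset_of_nonneg hsub fun i _ _ => sq_nonneg _
        rw [Finset.sum_union hd, hsum_filter r, hsum_filter (-r)] at hge
        have e1 : (cnt r : ℝ) ≥ (k : ℝ) + 1 := by exact_mod_cast hcntr'
        have e2 : (cnt (-r) : ℝ) ≥ (k : ℝ) + 1 := by exact_mod_cast hcntnegr'
        have e3 : (-r) ^ 2 = r ^ 2 := by ring
        rw [e3] at hge
        nlinarith [sq_nonneg r]
      constructor
      · rw [hcase, hn]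
        have hk2' : (1:ℝ) ≤ (k:ℝ) := by exact_mod_cast hk2
        nlinarith [hrpos, hineq]
      · exact hk2
    · -- μ < r
      have hE : eigSp B μ ≤ LinearMap.ker (sumF (Γ ⊕ Γ)) := hker (ne_of_lt hcase)
      have hW0eq : W0 A μ = eigSp B μ := by
        rw [W0]
        exact inf_eq_left.mpr hE
      have hEne : eigSp B μ ≠ ⊥ := by
        obtain ⟨i, hi⟩ := hμeig
        intro h
        have hmem : eigBasis hM i ∈ eigSp B μ := hi ▸ eigBasis_mem hM i
        rw [h, Submodule.mem_bot] at hmem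
        exact (eigBasis hM).ne_zero i hmem
      have hW0ne : W0 A μ ≠ ⊥ := by rw [hW0eq]; exact hEne
      obtain ⟨hk1, hk2⟩ := key_rep A hpos hW0ne
      rw [hW0eq] at hk1
      have hcntμ : k ≤ cnt μ := le_trans hk1 (hcnt_ge μ)
      have hcntnegμ : k ≤ cnt (-μ) := by
        have h1 := hflip μ
        have h2 := hcnt_ge (-μ)
        omega
      -- four distinct values
      have hd1 : μ ≠ -μ := by intro h; linarith [h]
      have hd2 : μ ≠ r := ne_of_lt hcase
      have hd3 : μ ≠ -r := by intro h; linarith [h]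
      have hd4 : (-μ) ≠ r := by intro h; nlinarith [h]
      have hd5 : (-μ) ≠ -r := by intro h; nlinarith [h]
      have hd6 : r ≠ -r := by intro h; linarith [h]
      have hdj12 := hdisj μ (-μ) hd1
      have hdj34 := hdisj r (-r) hd6
      have hdj12_34 : Disjoint
          (((univ : Finset (Γ ⊕ Γ)).filter fun i => hM.eigenvalues i = μ) ∪
            ((univ : Finset (Γ ⊕ Γ)).filter fun i => hM.eigenvalues i = -μ))
          (((univ : Finset (Γ ⊕ Γ)).filter fun i => hM.eigenvalues i = r) ∪
            ((univ : Finset (Γ ⊕ Γ)).filter fun i => hM.eigenvalues i = -r)) := by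
        rw [Finset.disjoint_union_left]
        constructor
        · rw [Finset.disjoint_union_right]
          exact ⟨hdisj μ r hd2, hdisj μ (-r) hd3⟩
        · rw [Finset.disjoint_union_right]
          exact ⟨hdisj (-μ) r hd4, hdisj (-μ) (-r) hd5⟩
      have hge : ∑ i ∈ ((((univ : Finset (Γ ⊕ Γ)).filter fun i => hM.eigenvalues i = μ) ∪
            ((univ : Finset (Γ ⊕ Γ)).filter fun i => hM.eigenvalues i = -μ)) ∪
            (((univ : Finset (Γ ⊕ Γ)).filter fun i => hM.eigenvalues i = r) ∪
            ((univ : Finset (Γ ⊕ Γ)).filter fun i => hM.eigenvalues i = -r))),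
          hM.eigenvalues i ^ 2 ≤ ∑ i, hM.eigenvalues i ^ 2 :=
        Finset.sum_le_sum_of_subset_of_nonneg (Finset.subset_univ _) fun i _ _ => sq_nonneg _
      rw [Finset.sum_union hdj12_34, Finset.sum_union hdj12, Finset.sum_union hdj34] at hge
      rw [hsum_filter μ, hsum_filter (-μ), hsum_filter r, hsum_filter (-r), htr] at hge
      have e1 : (cnt μ : ℝ) ≥ (k : ℝ) := by exact_mod_cast hcntμ
      have e2 : (cnt (-μ) : ℝ) ≥ (k : ℝ) := by exact_mod_cast hcntnegμ
      have e3 : (cnt r : ℝ) ≥ 1 := by exact_mod_cast hcnt_r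
      have e4 : (cnt (-r) : ℝ) ≥ 1 := by exact_mod_cast hcnt_negr
      have e5 : (-μ) ^ 2 = μ ^ 2 := by ring
      have e6 : (-r) ^ 2 = r ^ 2 := by ring
      rw [e5, e6] at hge
      refine ⟨?_, hk2⟩
      rw [hn]
      nlinarith [sq_nonneg μ, sq_nonneg r, hpos, hge]
  obtain ⟨hfin, hk1'⟩ := hfinal
  have hkpos : (0:ℝ) < (k : ℝ) := by exact_mod_cast hk1'
  apply Real.le_sqrt_of_sq_le
  rw [le_div_iff₀ hkpos]
  exact hfin
end
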